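/- For two agents with bi-valued additive valuations taking values in {a, b} with 0 < a <= b, and identical goods arriving over rounds: if an allocation is EF1 via round-robin structure where at each point |A_i| and |A_j| differ by at most one and the next pick goes to the agent with fewer goods, then for all agents i,j and every prefix, v_i(A_i) >= (a/b) · v_i(A_j \ {g}) for every g ∈ A_j. Moreover the ratio a/b is tight: with goods valued (a, a, b) arriving as O_1={a,a}, O_2={b} and identical valuations, no allocation sequence achieves a ratio better than a/b. -/
import Mathlib


/-- For bi-valued goods (values in `{a, b}`, `0 < a ≤ b`): (1) under the
round-robin card structure (`|A_j| ≤ |A_i| + 1`), the allocation is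
`a/b`-EFX for agent `i` against `j`; (2) the ratio `a/b` is tight: with
goods valued `(a, a, b)` arriving as `O₁ = {g₁, g₂}`, `O₂ = {g₃}` and two
agents with identical valuations, no allocation sequence is `α`-TEFX for any
`α > a/b`. -/
theorem stmt7 (a b : ℝ) (ha : 0 < a) (hab : a ≤ b) :
    (∀ (G : Type) (_ : DecidableEq G) (v : G → ℝ),
      (∀ g, v g = a ∨ v g = b) →
      ∀ Ai Aj : Finset G, Aj.card ≤ Ai.card + 1 →
        ∀ g ∈ Aj, (a / b) * ((Aj.erase g).sum v) ≤ Ai.sum v) ∧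
    (∀ α : ℝ, a / b < α →
      ¬ ∃ A : Fin 2 → Fin 2 → Finset (Fin 3),
        A 0 0 ∪ A 0 1 = ({0, 1} : Finset (Fin 3)) ∧
        Disjoint (A 0 0) (A 0 1) ∧
        A 1 0 ∪ A 1 1 = ({0, 1, 2} : Finset (Fin 3)) ∧
        Disjoint (A 1 0) (A 1 1) ∧
        (∀ i : Fin 2, A 0 i ⊆ A 1 i) ∧
        (∀ t i j : Fin 2, ∀ g ∈ A t j,
          α * ((A t j).erase g).sum (![a, a, b] : Fin 3 → ℝ)
            ≤ (A t i).sum (![a, a, b] : Fin 3 → ℝ))) := by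
  have hb : (0:ℝ) < b := lt_of_lt_of_le ha hab
  constructor
  · intro G _ v hv Ai Aj hcard g hg
    have h1 : (Aj.erase g).sum v ≤ ((Aj.erase g).card : ℝ) * b := by
      calc (Aj.erase g).sum v ≤ ∑ _x ∈ Aj.erase g, b := by
            apply Finset.sum_le_sum
            intro x _
            rcases hv x with h | h <;> simp [h, hab]
        _ = ((Aj.erase g).card : ℝ) * b := by
            rw [Finset.sum_const, nsmul_eq_mul]
    have h2 : (Ai.card : ℝ) * a ≤ Ai.sum v := by
      calc (Ai.card : ℝ) * a = ∑ _x ∈ Ai, a := by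
            rw [Finset.sum_const, nsmul_eq_mul]
        _ ≤ Ai.sum v := by
            apply Finset.sum_le_sum
            intro x _
            rcases hv x with h | h <;> simp [h, hab]
    have h3 : ((Aj.erase g).card : ℝ) ≤ (Ai.card : ℝ) := by
      have h := Finset.card_erase_of_mem hg
      have hc : (Aj.erase g).card ≤ Ai.card := by omega
      exact_mod_cast hc
    have h4 : (0:ℝ) ≤ (Aj.erase g).sum v := by
      apply Finset.sum_nonneg
      intro x _
      rcases hv x with h | h <;> rw [h] <;> linarith
    rw [div_mul_eq_mul_div, div_le_iff₀ hb]
    nlinarith [mul_le_mul_of_nonneg_left h1 ha.le,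
      mul_le_mul_of_nonneg_right h3 (mul_pos ha hb).le,
      mul_le_mul_of_nonneg_right h2 hb.le]
  · rintro α hα ⟨A, h01, hd0, h11, hd1, hsub, htefx⟩
    have hαpos : 0 < α := lt_trans (div_pos ha hb) hα
    have hba : a < α * b := by
      rw [div_lt_iff₀ hb] at hα; linarith
    have hA01 : A 0 1 = ({0,1} : Finset (Fin 3)) \ A 0 0 := by
      rw [← h01]; exact (Finset.union_sdiff_cancel_left hd0).symm
    have hA11 : A 1 1 = ({0,1,2} : Finset (Fin 3)) \ A 1 0 := by
      rw [← h11]; exact (Finset.union_sdiff_cancel_left hd1).symm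
    have hsub0 : A 0 0 ⊆ ({0,1} : Finset (Fin 3)) := by
      rw [← h01]; exact Finset.subset_union_left
    have hsub1 : A 1 0 ⊆ ({0,1,2} : Finset (Fin 3)) := by
      rw [← h11]; exact Finset.subset_union_left
    have e0 : ∀ s : Finset (Fin 3), s ⊆ {0,1} →
        s = ∅ ∨ s = {0} ∨ s = {1} ∨ s = {0,1} := by decide
    have e1 : ∀ s : Finset (Fin 3), s ⊆ {0,1,2} →
        s = ∅ ∨ s = {0} ∨ s = {1} ∨ s = {2} ∨ s = {0,1} ∨ s = {0,2} ∨
          s = {1,2} ∨ s = {0,1,2} := by decide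
    have hs0 := hsub 0
    have hs1 := hsub 1
    have er1 : ({0,1} : Finset (Fin 3)).erase 0 = {1} := by decide
    have er2 : ({1,2} : Finset (Fin 3)).erase 1 = {2} := by decide
    have er3 : ({0,2} : Finset (Fin 3)).erase 0 = {2} := by decide
    rcases e0 _ hsub0 with h00 | h00 | h00 | h00 <;>
      rcases e1 _ hsub1 with h10 | h10 | h10 | h10 | h10 | h10 | h10 | h10 <;>
      rw [h00] at hA01 hs0 <;> rw [h10] at hA11 hs0 <;>
      simp only [show ({0,1} : Finset (Fin 3)) \ ∅ = {0,1} from by decide,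
        show ({0,1} : Finset (Fin 3)) \ {0} = {1} from by decide,
        show ({0,1} : Finset (Fin 3)) \ {1} = {0} from by decide,
        show ({0,1} : Finset (Fin 3)) \ {0,1} = ∅ from by decide,
        show ({0,1,2} : Finset (Fin 3)) \ ∅ = {0,1,2} from by decide,
        show ({0,1,2} : Finset (Fin 3)) \ {0} = {1,2} from by decide,
        show ({0,1,2} : Finset (Fin 3)) \ {1} = {0,2} from by decide,
        show ({0,1,2} : Finset (Fin 3)) \ {2} = {0,1} from by decide,
        show ({0,1,2} : Finset (Fin 3)) \ {0,1} = {2} from by decide,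
        show ({0,1,2} : Finset (Fin 3)) \ {0,2} = {1} from by decide,
        show ({0,1,2} : Finset (Fin 3)) \ {1,2} = {0} from by decide,
        show ({0,1,2} : Finset (Fin 3)) \ {0,1,2} = ∅ from by decide] at hA01 hA11 <;>
      rw [hA01, hA11] at hs1 <;>
      first
      | exact absurd hs0 (by decide)
      | exact absurd hs1 (by decide)
      | (have h := htefx 0 0 1 0 (by rw [hA01]; decide)
         rw [hA01, h00] at h
         simp [er1, er2, er3] at h
         nlinarith [mul_pos hαpos ha])
      | (have h := htefx 0 1 0 0 (by rw [h00]; decide)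
         rw [hA01, h00] at h
         simp [er1, er2, er3] at h
         nlinarith [mul_pos hαpos ha])
      | (have h := htefx 1 0 1 0 (by rw [hA11]; decide)
         rw [hA11, h10] at h
         simp [er1, er2, er3] at h
         nlinarith [mul_pos hαpos ha])
      | (have h := htefx 1 0 1 1 (by rw [hA11]; decide)
         rw [hA11, h10] at h
         simp [er1, er2, er3] at h
         nlinarith [mul_pos hαpos ha])
      | (have h := htefx 1 1 0 0 (by rw [h10]; decide)
         rw [hA11, h10] at h
         simp [er1, er2, er3] at h
         nlinarith [mul_pos hαpos ha])
      | (have h := htefx 1 1 0 1 (by rw [h10]; decide)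
         rw [hA11, h10] at h
         simp [er1, er2, er3] at h
         nlinarith [mul_pos hαpos ha])
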